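/- Let n be prime and let w be a nonconstant word of length n. Then cstd(w) = π if and only if w ∈ A(π, Des(π c π⁻¹)), where c is the cyclic shift i ↦ i+1 (mod n). -/

import Mathlib

set_option linter.unusedSectionVars false


/-- The (0-indexed) descent set of a map `σ : Fin n → Fin n`:
positions `i` with `σ(i) > σ(i+1)`. -/
def desSet (n : ℕ) (σ : Fin n → Fin n) : Set ℕ :=
  {i | ∃ h : i + 1 < n, σ ⟨i + 1, h⟩ < σ ⟨i, Nat.lt_of_succ_lt h⟩}

/-- `χ ∈ A(π, S)`: the coloring `χ` is weakly increasing along `π⁻¹(0), …, π⁻¹(n-1)`,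
strictly from position `i` to `i+1` whenever `i ∈ S`. -/
def inA (n : ℕ) (π : Equiv.Perm (Fin n)) (S : Set ℕ) (χ : Fin n → ℕ) : Prop :=
  ∀ i : ℕ, ∀ h : i + 1 < n,
    χ (π.symm ⟨i, Nat.lt_of_succ_lt h⟩) ≤ χ (π.symm ⟨i + 1, h⟩) ∧
    (i ∈ S → χ (π.symm ⟨i, Nat.lt_of_succ_lt h⟩) < χ (π.symm ⟨i + 1, h⟩))

/-- Strict lexicographic order on words of length `n`. -/
def lexLt (n : ℕ) (f g : Fin n → ℕ) : Prop :=
  ∃ k : Fin n, (∀ j < k, f j = g j) ∧ f k < g k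


section aux

variable {n : ℕ} [NeZero n]

lemma lexLt_asymm {f g : Fin n → ℕ} (h1 : lexLt n f g) (h2 : lexLt n g f) : False := by
  obtain ⟨k1, e1, s1⟩ := h1
  obtain ⟨k2, e2, s2⟩ := h2
  rcases lt_trichotomy k1 k2 with h | h | h
  · exact absurd (e2 k1 h) (by omega)
  · subst h; omega
  · exact absurd (e1 k2 h) (by omega)

lemma lexLt_irrefl {f : Fin n → ℕ} (h : lexLt n f f) : False := by
  obtain ⟨k, _, s⟩ := h; omega

lemma rot_eq_imp_eq (hn : n.Prime) {w : Fin n → ℕ} (hw : ¬ ∃ a, ∀ i, w i = a)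
    {x y : Fin n} (h : ∀ t, w (x + t) = w (y + t)) : x = y := by
  by_contra hne
  set d : Fin n := y - x with hd
  have hd0 : d ≠ 0 := sub_ne_zero.mpr (Ne.symm hne)
  have hstep : ∀ s : Fin n, w s = w (s + d) := by
    intro s
    have := h (s - x)
    simp only [add_sub_cancel] at this
    rw [this]
    congr 1
    simp [hd]; abel
  have hnsmul : ∀ (k : ℕ) (s : Fin n), w (s + k • d) = w s := by
    intro k
    induction k with
    | zero => intro s; simp
    | succ m ih =>
      intro s
      have : s + (m + 1) • d = (s + d) + m • d := by
        rw [succ_nsmul]; abel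
      rw [this, ih, ← hstep]
  have hord : addOrderOf d = n := by
    have h1 : addOrderOf d ∣ n := by
      have := addOrderOf_dvd_card (x := d); simpa using this
    rcases (hn.eq_one_or_self_of_dvd _ h1) with h2 | h2
    · exact absurd (AddMonoid.addOrderOf_eq_one_iff.mp h2) hd0
    · exact h2
  have key : ∀ a b : ℕ, a ≤ b → b < n → b • d = a • d → a = b := by
    intro a b hab hbn heq
    have h0 : (b - a) • d = 0 := by
      rw [sub_nsmul d hab, heq]; exact add_neg_cancel _
    have hdvd : n ∣ (b - a) := by
      rw [← hord]; exact addOrderOf_dvd_of_nsmul_eq_zero h0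
    have : b - a = 0 := Nat.eq_zero_of_dvd_of_lt hdvd (by omega)
    omega
  have hsurj : Function.Surjective (fun k : Fin n => (k.val) • d) := by
    apply Finite.injective_iff_surjective.mp
    intro a b hab
    simp only at hab
    apply Fin.ext
    rcases le_total a.val b.val with hle | hle
    · exact key a.val b.val hle b.isLt hab.symm
    · exact (key b.val a.val hle a.isLt hab).symm
  apply hw
  refine ⟨w x, fun i => ?_⟩
  obtain ⟨k, hk⟩ := hsurj (i - x)
  have : i = x + k.val • d := by
    simp only at hk; rw [hk]; abel
  rw [this, hnsmul]

end aux

section shifts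
variable {n : ℕ} [NeZero n]

lemma val_one_add (hn1 : 1 < n) (j : Fin n) (hj : j.val + 1 < n) :
    ((1 : Fin n) + j).val = j.val + 1 := by
  rw [Fin.add_def]
  show ((1 : Fin n).val + j.val) % n = j.val + 1
  have h1 : (1 : Fin n).val = 1 :=
    (Fin.val_one' n).trans (Nat.mod_eq_of_lt hn1)
  rw [h1, Nat.mod_eq_of_lt (by omega)]
  omega

lemma shift_fwd (hn1 : 1 < n) {w : Fin n → ℕ} {x y : Fin n} (hxy : w x = w y)
    (h : lexLt n (fun t => w (x + t)) (fun t => w (y + t))) :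
    lexLt n (fun t => w (x + 1 + t)) (fun t => w (y + 1 + t)) := by
  obtain ⟨k, e, s⟩ := h
  simp only at e s
  have hk0 : k.val ≠ 0 := by
    intro h0
    have : k = 0 := Fin.ext h0
    subst this
    simp only [add_zero] at s
    omega
  refine ⟨⟨k.val - 1, by omega⟩, ?_, ?_⟩
  · intro j hj
    simp only [Fin.lt_def] at hj
    have hj1 : j.val + 1 < n := by have := k.isLt; omega
    have hkey : x + 1 + j = x + (1 + j) := by abel
    have hkey2 : y + 1 + j = y + (1 + j) := by abel
    simp only [hkey, hkey2]
    apply e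
    simp only [Fin.lt_def, val_one_add hn1 j hj1]
    omega
  · have hj1 : (⟨k.val - 1, by omega⟩ : Fin n).val + 1 < n := by
      have := k.isLt; simp; omega
    have h1k : (1 : Fin n) + ⟨k.val - 1, by omega⟩ = k := by
      apply Fin.ext
      rw [val_one_add hn1 _ hj1]
      simp; omega
    have hkey : x + 1 + ⟨k.val - 1, by omega⟩ = x + k := by
      rw [add_assoc, h1k]
    have hkey2 : y + 1 + ⟨k.val - 1, by omega⟩ = y + k := by
      rw [add_assoc, h1k]
    simp only [hkey, hkey2]
    exact s

lemma shift_bwd (hn1 : 1 < n) {w : Fin n → ℕ} {x y : Fin n} (hxy : w x = w y)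
    (h : lexLt n (fun t => w (x + 1 + t)) (fun t => w (y + 1 + t))) :
    lexLt n (fun t => w (x + t)) (fun t => w (y + t)) := by
  obtain ⟨k, e, s⟩ := h
  simp only at e s
  by_cases hk : k.val + 1 < n
  · refine ⟨⟨k.val + 1, hk⟩, ?_, ?_⟩
    · intro j hj
      simp only [Fin.lt_def] at hj
      by_cases hj0 : j.val = 0
      · have : j = 0 := Fin.ext hj0
        subst this
        simpa using hxy
      · have hjlt : j.val - 1 < n := by have := j.isLt; omega
        set j0 : Fin n := ⟨j.val - 1, hjlt⟩ with hj0def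
        have hj1 : j0.val + 1 < n := by
          have := j.isLt; simp only [hj0def]; omega
        have h1j : (1 : Fin n) + j0 = j := by
          apply Fin.ext
          rw [val_one_add hn1 _ hj1]
          simp only [hj0def]; omega
        have hkey : x + j = x + 1 + j0 := by rw [add_assoc, h1j]
        have hkey2 : y + j = y + 1 + j0 := by rw [add_assoc, h1j]
        show w (x + j) = w (y + j)
        rw [hkey, hkey2]
        apply e
        simp only [Fin.lt_def, hj0def]
        omega
    · have h1k : (1 : Fin n) + k = ⟨k.val + 1, hk⟩ := by
        apply Fin.ext
        rw [val_one_add hn1 _ hk]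
      have hkey : x + ⟨k.val + 1, hk⟩ = x + 1 + k := by
        rw [add_assoc, h1k]
      have hkey2 : y + ⟨k.val + 1, hk⟩ = y + 1 + k := by
        rw [add_assoc, h1k]
      show w (x + ⟨k.val + 1, hk⟩) < w (y + ⟨k.val + 1, hk⟩)
      rw [hkey, hkey2]
      exact s
  · exfalso
    have hkval : k.val = n - 1 := by have := k.isLt; omega
    have h1k : (1 : Fin n) + k = 0 := by
      apply Fin.ext
      rw [Fin.add_def]
      show ((1 : Fin n).val + k.val) % n = (0 : Fin n).val
      have h1 : (1 : Fin n).val = 1 :=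
        (Fin.val_one' n).trans (Nat.mod_eq_of_lt hn1)
      have h0 : (0 : Fin n).val = 0 := rfl
      rw [h1, hkval, h0]
      have hsum : 1 + (n - 1) = n := by omega
      rw [hsum, Nat.mod_self]
    have hx : x + 1 + k = x := by rw [add_assoc, h1k, add_zero]
    have hy : y + 1 + k = y := by rw [add_assoc, h1k, add_zero]
    rw [hx, hy] at s
    omega

section chains
variable {n : ℕ} [NeZero n] {π : Equiv.Perm (Fin n)} {S : Set ℕ} {w : Fin n → ℕ}

lemma chain_weak (HA : inA n π S w) :
    ∀ q (hq : q < n) p (hp : p ≤ q),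
      w (π.symm ⟨p, lt_of_le_of_lt hp hq⟩) ≤ w (π.symm ⟨q, hq⟩) := by
  intro q
  induction q with
  | zero =>
    intro hq p hp
    have : p = 0 := by omega
    subst this; exact le_refl _
  | succ m ih =>
    intro hq p hp
    by_cases hpm : p = m + 1
    · subst hpm; exact le_refl _
    · calc w (π.symm ⟨p, _⟩) ≤ w (π.symm ⟨m, by omega⟩) := ih (by omega) p (by omega)
        _ ≤ w (π.symm ⟨m + 1, hq⟩) := (HA m hq).1

lemma sigma_strict_mono {σ : Equiv.Perm (Fin n)} (HA : inA n π (desSet n ⇑σ) w) :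
    ∀ q (hq : q < n) p (hpq : p < q),
      (∀ i (hi : i < n), p ≤ i → i ≤ q →
        w (π.symm ⟨i, hi⟩) = w (π.symm ⟨p, by omega⟩)) →
      σ ⟨p, by omega⟩ < σ ⟨q, hq⟩ := by
  have step : ∀ i (h2 : i + 1 < n),
      w (π.symm ⟨i, Nat.lt_of_succ_lt h2⟩) = w (π.symm ⟨i + 1, h2⟩) →
      σ ⟨i, Nat.lt_of_succ_lt h2⟩ < σ ⟨i + 1, h2⟩ := by
    intro i h2 heqi
    have hnot : i ∉ desSet n ⇑σ := by
      intro hdes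
      have := (HA i h2).2 hdes
      omega
    have hle : σ ⟨i, Nat.lt_of_succ_lt h2⟩ ≤ σ ⟨i + 1, h2⟩ := by
      by_contra hlt
      exact hnot ⟨h2, not_le.mp hlt⟩
    have hne : σ ⟨i, Nat.lt_of_succ_lt h2⟩ ≠ σ ⟨i + 1, h2⟩ := by
      intro hcon
      have := σ.injective hcon
      simp only [Fin.mk.injEq] at this
      omega
    exact lt_of_le_of_ne hle hne
  intro q
  induction q with
  | zero => intro hq p hpq; omega
  | succ m ih =>
    intro hq p hpq heq
    by_cases hpm : p = m
    · subst hpm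
      exact step p hq (by rw [heq (p+1) hq (by omega) (by omega)])
    · have h1 : σ (⟨p, by omega⟩ : Fin n) < σ ⟨m, by omega⟩ :=
        ih (by omega) p (by omega) (fun i hi h1 h2 => heq i hi h1 (by omega))
      have h2 : σ (⟨m, by omega⟩ : Fin n) < σ ⟨m + 1, hq⟩ := by
        apply step m hq
        rw [heq m (by omega) (by omega) (by omega),
            heq (m+1) hq (by omega) (by omega)]
      exact lt_trans h1 h2

end chains
end shifts

/-- Let `n` be prime and `w` a nonconstant word of length `n`.
Then `cstd w = π` (i.e. `π` orders the rotations of `w` lexicographically: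
`π x < π y ↔ r_x(w) <_lex r_y(w)`) if and only if `w ∈ A(π, Des(π c π⁻¹))`,
where `c` is the cyclic shift `i ↦ i + 1 (mod n)`. -/
theorem cstd_iff_mem_A (n : ℕ) [NeZero n] (hn : n.Prime) (w : Fin n → ℕ)
    (hw : ¬ ∃ a, ∀ i, w i = a) (π : Equiv.Perm (Fin n)) :
    (∀ x y : Fin n, π x < π y ↔ lexLt n (fun t => w (x + t)) (fun t => w (y + t)))
      ↔ inA n π (desSet n ⇑(π * Equiv.addRight (1 : Fin n) * π⁻¹)) w := by
  have hn1 : 1 < n := hn.one_lt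
  have hsigma : ∀ z : Fin n, (π * Equiv.addRight (1 : Fin n) * π⁻¹) z = π (π.symm z + 1) := by
    intro z
    simp [Equiv.Perm.mul_apply, Equiv.Perm.inv_def]
  constructor
  · -- forward
    intro H i h
    set a := π.symm ⟨i, Nat.lt_of_succ_lt h⟩ with ha
    set b := π.symm ⟨i + 1, h⟩ with hb
    have hab : π a < π b := by
      rw [ha, hb, Equiv.apply_symm_apply, Equiv.apply_symm_apply]
      simp [Fin.lt_def]
    have hlex := (H a b).mp hab
    have hweak : w a ≤ w b := by
      obtain ⟨k, e, s⟩ := hlex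
      by_cases hk : k = 0
      · subst hk
        simp only [add_zero] at s
        exact le_of_lt s
      · have h0k : (0 : Fin n) < k := by
          simp only [Fin.lt_def]
          have := Fin.val_ne_of_ne hk
          simp only [Fin.val_zero] at this ⊢
          omega
        have := e 0 h0k
        simp only [add_zero] at this
        exact le_of_eq this
    refine ⟨hweak, fun hdes => ?_⟩
    rcases lt_or_eq_of_le hweak with hlt | heq
    · exact hlt
    · exfalso
      obtain ⟨h', hσ⟩ := hdes
      rw [hsigma, hsigma] at hσ
      have hπ1 : π (b + 1) < π (a + 1) := hσ
      have hlex1 := shift_fwd hn1 heq hlex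
      have := (H (a + 1) (b + 1)).mpr hlex1
      omega
  · -- backward
    intro HA
    have key : ∀ m : ℕ, ∀ x y : Fin n, π x < π y →
        (∃ t : Fin n, t.val = m ∧ w (x + t) ≠ w (y + t) ∧
          ∀ s < t, w (x + s) = w (y + s)) →
        lexLt n (fun t => w (x + t)) (fun t => w (y + t)) := by
      intro m
      induction m using Nat.strong_induction_on with
      | _ m ih =>
        rintro x y hπ ⟨t, htm, hne, hmin⟩
        have hx : π.symm ⟨(π x).val, (π x).isLt⟩ = x := by
          rw [Fin.eta, Equiv.symm_apply_apply]
        have hy : π.symm ⟨(π y).val, (π y).isLt⟩ = y := by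
          rw [Fin.eta, Equiv.symm_apply_apply]
        have hπval : (π x).val < (π y).val := hπ
        have hweak : w x ≤ w y := by
          have := chain_weak HA (π y).val (π y).isLt (π x).val (le_of_lt hπval)
          rwa [hx, hy] at this
        match m, ih with
        | 0, _ =>
          have ht0 : t = 0 := Fin.ext htm
          subst ht0
          simp only [add_zero] at hne
          refine ⟨0, fun j hj => absurd hj (by simp [Fin.lt_def]), ?_⟩
          simp only [add_zero]
          exact lt_of_le_of_ne hweak hne
        | m' + 1, ih =>
          have hxy : w x = w y := by
            have := hmin 0 (Fin.lt_def.mpr (by simp only [Fin.val_zero]; omega))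
            simpa using this
          have hπ1 : π (x + 1) < π (y + 1) := by
            have hmono := sigma_strict_mono (σ := π * Equiv.addRight (1 : Fin n) * π⁻¹)
              HA (π y).val (π y).isLt (π x).val hπval ?_
            · rw [hsigma, hsigma, hx, hy] at hmono
              exact hmono
            · intro i hi h1 h2
              have hle1 := chain_weak HA i hi (π x).val h1
              have hle2 := chain_weak HA (π y).val (π y).isLt i h2
              rw [hx] at hle1
              rw [hy] at hle2
              apply le_antisymm
              · calc w (π.symm ⟨i, hi⟩) ≤ w y := hle2
                  _ = w x := hxy.symm
                  _ = w (π.symm ⟨(π x).val, (π x).isLt⟩) := by rw [hx]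
              · rw [hx]; exact hle1
          have hm'n : m' < n := by have := t.isLt; omega
          set t' : Fin n := ⟨m', hm'n⟩ with ht'
          have ht'1 : t'.val + 1 < n := by have := t.isLt; simp only [ht']; omega
          have h1t' : (1 : Fin n) + t' = t := by
            apply Fin.ext
            rw [val_one_add hn1 _ ht'1]
            simp only [ht']; omega
          have hxt : x + 1 + t' = x + t := by rw [add_assoc, h1t']
          have hyt : y + 1 + t' = y + t := by rw [add_assoc, h1t']
          have hlex1 : lexLt n (fun s => w (x + 1 + s)) (fun s => w (y + 1 + s)) := by
            apply ih m' (by omega) (x + 1) (y + 1) hπ1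
            refine ⟨t', rfl, ?_, ?_⟩
            · rw [hxt, hyt]; exact hne
            · intro s hs
              simp only [Fin.lt_def, ht'] at hs
              have hs1 : s.val + 1 < n := by omega
              have h1s : ((1 : Fin n) + s).val = s.val + 1 := val_one_add hn1 s hs1
              have hxs : x + 1 + s = x + (1 + s) := by rw [add_assoc]
              have hys : y + 1 + s = y + (1 + s) := by rw [add_assoc]
              rw [hxs, hys]
              apply hmin
              simp only [Fin.lt_def, h1s]
              omega
          exact shift_bwd hn1 hxy hlex1
    intro x y
    constructor
    · intro hπ
      have hxy : x ≠ y := by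
        intro hcon; subst hcon; exact absurd hπ (lt_irrefl _)
      have hdiff : ∃ t : Fin n, w (x + t) ≠ w (y + t) := by
        by_contra hcon
        push_neg at hcon
        exact hxy (rot_eq_imp_eq hn hw hcon)
      set T : Finset (Fin n) := Finset.univ.filter (fun t => w (x + t) ≠ w (y + t)) with hT
      have hTne : T.Nonempty := by
        obtain ⟨t, ht⟩ := hdiff
        exact ⟨t, by simp [hT, ht]⟩
      set t0 := T.min' hTne with ht0
      have ht0mem : t0 ∈ T := T.min'_mem hTne
      have ht0ne : w (x + t0) ≠ w (y + t0) := by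
        simpa [hT] using ht0mem
      apply key t0.val x y hπ
      refine ⟨t0, rfl, ht0ne, fun s hs => ?_⟩
      by_contra hcon
      have : s ∈ T := by simp [hT, hcon]
      have := T.min'_le s this
      rw [← ht0] at this
      exact absurd hs (not_lt.mpr this)
    · intro hlex
      rcases lt_trichotomy (π x) (π y) with h | h | h
      · exact h
      · exfalso
        have : x = y := π.injective h
        subst this
        exact lexLt_irrefl hlex
      · exfalso
        -- π y < π x, so lexLt rot y rot x, contradict asymm
        have hyx : x ≠ y := by
          intro hcon; subst hcon; exact absurd h (lt_irrefl _)
        have hdiff : ∃ t : Fin n, w (y + t) ≠ w (x + t) := by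
          by_contra hcon
          push_neg at hcon
          exact hyx (rot_eq_imp_eq hn hw (fun t => (hcon t).symm))
        set T : Finset (Fin n) := Finset.univ.filter (fun t => w (y + t) ≠ w (x + t)) with hT
        have hTne : T.Nonempty := by
          obtain ⟨t, ht⟩ := hdiff
          exact ⟨t, by simp [hT, ht]⟩
        set t0 := T.min' hTne with ht0
        have ht0mem : t0 ∈ T := T.min'_mem hTne
        have ht0ne : w (y + t0) ≠ w (x + t0) := by
          simpa [hT] using ht0mem
        have hlex2 : lexLt n (fun t => w (y + t)) (fun t => w (x + t)) := by
          apply key t0.val y x h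
          refine ⟨t0, rfl, ht0ne, fun s hs => ?_⟩
          by_contra hcon
          have : s ∈ T := by simp [hT, hcon]
          have := T.min'_le s this
          rw [← ht0] at this
          exact absurd hs (not_lt.mpr this)
        exact lexLt_asymm hlex hlex2
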